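/- Let (F₁, F₂) and (G₁, G₂) be the CHFIS pairs, with the same parameters α_{n,m}, β_{n,m}, γ_{n,m}, for generalized interpolation data Δ = {(x_i, y_j, z_{i,j}, t_{i,j})} and Δ* = {(x*_i, y*_j, z_{i,j}, t_{i,j})} respectively, where the knots satisfy the invariance-of-ratio condition and S* ⊆ S, and let R : S → S* be the cell-wise affine transfer map. Suppose M̄ ≥ 0 and δ ∈ (0,1] are such that |F₁(X) − F₁(X̄)| ≤ M̄ · d_M(X,X̄)^δ for all X, X̄ ∈ S. Then sup_{(x,y) ∈ S*} |G₁(x,y) − F₁(x,y)| ≤ (β/(1−α)) · sup_{(x,y) ∈ S} |G₂(R(x,y)) − F₂(x,y)| + ((1+α)/(1−α)) · M̄ · max{ (|x_n − x*_n| + |y_m − y*_m|)^δ : 0 ≤ n ≤ N, 0 ≤ m ≤ M }, where α = max_{n,m}|α_{n,m}| and β = max_{n,m}|β_{n,m}|. -/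

import Mathlib

open Real Set

noncomputable section

/-- `z_eva` (resp. `t_eva`) from the paper: `z N M - z N 0 - z 0 M + z 0 0`. -/
def eva (N M : ℕ) (z : ℕ → ℕ → ℝ) : ℝ := z N M - z N 0 - z 0 M + z 0 0

/-- The coefficient `g_{n,m}` determined by the join-up conditions. -/
def gCoef (N M : ℕ) (x y : ℕ → ℝ) (z t : ℕ → ℕ → ℝ) (a b : ℕ → ℕ → ℝ) (n m : ℕ) : ℝ :=
  (z (n-1) (m-1) - z (n-1) m - z n (m-1) + z n m
    - a n m * eva N M z - b n m * eva N M t) / ((x 0 - x N) * (y 0 - y M))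

/-- The coefficient `e_{n,m}`. -/
def eCoef (N M : ℕ) (x y : ℕ → ℝ) (z t : ℕ → ℕ → ℝ) (a b : ℕ → ℕ → ℝ) (n m : ℕ) : ℝ :=
  (z (n-1) (m-1) - z n (m-1) - a n m * (z 0 0 - z N 0) - b n m * (t 0 0 - t N 0)
    - gCoef N M x y z t a b n m * (x 0 - x N) * y 0) / (x 0 - x N)

/-- The coefficient `f_{n,m}`. -/
def fCoef (N M : ℕ) (x y : ℕ → ℝ) (z t : ℕ → ℕ → ℝ) (a b : ℕ → ℕ → ℝ) (n m : ℕ) : ℝ :=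
  (z (n-1) (m-1) - z (n-1) m - a n m * (z 0 0 - z 0 M) - b n m * (t 0 0 - t 0 M)
    - gCoef N M x y z t a b n m * (y 0 - y M) * x 0) / (y 0 - y M)

/-- The coefficient `k_{n,m}`. -/
def kCoef (N M : ℕ) (x y : ℕ → ℝ) (z t : ℕ → ℕ → ℝ) (a b : ℕ → ℕ → ℝ) (n m : ℕ) : ℝ :=
  z n m - eCoef N M x y z t a b n m * x N - fCoef N M x y z t a b n m * y M
    - a n m * z N M - b n m * t N M - gCoef N M x y z t a b n m * x N * y M

/-- `p_{n,m}(X,Y) = e_{n,m} X + f_{n,m} Y + g_{n,m} X Y + k_{n,m}`. -/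
def pMap (N M : ℕ) (x y : ℕ → ℝ) (z t : ℕ → ℕ → ℝ) (a b : ℕ → ℕ → ℝ) (n m : ℕ)
    (X Y : ℝ) : ℝ :=
  eCoef N M x y z t a b n m * X + fCoef N M x y z t a b n m * Y
    + gCoef N M x y z t a b n m * X * Y + kCoef N M x y z t a b n m

/-- `q_{n,m}(X,Y) = ẽ_{n,m} X + f̃_{n,m} Y + g̃_{n,m} X Y + k̃_{n,m}`; it is `p` built from the
data `t` with parameters `γ` and `0`. -/
def qMap (N M : ℕ) (x y : ℕ → ℝ) (t : ℕ → ℕ → ℝ) (c : ℕ → ℕ → ℝ) (n m : ℕ) (X Y : ℝ) : ℝ :=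
  pMap N M x y t t c (fun _ _ => 0) n m X Y

/-- `φ_n` (resp. `ψ_m`): the affine map of `[x₀, x_N]` onto `[x_{n-1}, x_n]`. -/
def phiMap (N : ℕ) (x : ℕ → ℝ) (n : ℕ) (X : ℝ) : ℝ :=
  x (n-1) + (x n - x (n-1)) * (X - x 0) / (x N - x 0)

theorem coef_eqs (N M : ℕ) (x y : ℕ → ℝ) (z t : ℕ → ℕ → ℝ) (a b : ℕ → ℕ → ℝ) (n m : ℕ)
    (hx : x 0 - x N ≠ 0) (hy : y 0 - y M ≠ 0) :
    gCoef N M x y z t a b n m * ((x 0 - x N) * (y 0 - y M))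
        = z (n-1) (m-1) - z (n-1) m - z n (m-1) + z n m
          - a n m * eva N M z - b n m * eva N M t
      ∧ eCoef N M x y z t a b n m * (x 0 - x N)
        = z (n-1) (m-1) - z n (m-1) - a n m * (z 0 0 - z N 0) - b n m * (t 0 0 - t N 0)
          - gCoef N M x y z t a b n m * (x 0 - x N) * y 0
      ∧ fCoef N M x y z t a b n m * (y 0 - y M)
        = z (n-1) (m-1) - z (n-1) m - a n m * (z 0 0 - z 0 M) - b n m * (t 0 0 - t 0 M)
          - gCoef N M x y z t a b n m * (y 0 - y M) * x 0 := by
  refine ⟨div_mul_cancel₀ _ (mul_ne_zero hx hy), div_mul_cancel₀ _ hx, div_mul_cancel₀ _ hy⟩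

theorem corner00 (N M : ℕ) (x y : ℕ → ℝ) (z t : ℕ → ℕ → ℝ) (a b : ℕ → ℕ → ℝ) (n m : ℕ)
    (hx : x 0 - x N ≠ 0) (hy : y 0 - y M ≠ 0) :
    pMap N M x y z t a b n m (x 0) (y 0)
      = z (n-1) (m-1) - a n m * z 0 0 - b n m * t 0 0 := by
  obtain ⟨hG, hE, hF⟩ := coef_eqs N M x y z t a b n m hx hy
  simp only [pMap, kCoef, eva] at *
  linear_combination hE + hF - hG

theorem corner01 (N M : ℕ) (x y : ℕ → ℝ) (z t : ℕ → ℕ → ℝ) (a b : ℕ → ℕ → ℝ) (n m : ℕ)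
    (hx : x 0 - x N ≠ 0) (hy : y 0 - y M ≠ 0) :
    pMap N M x y z t a b n m (x 0) (y M)
      = z (n-1) m - a n m * z 0 M - b n m * t 0 M := by
  obtain ⟨hG, hE, hF⟩ := coef_eqs N M x y z t a b n m hx hy
  simp only [pMap, kCoef, eva] at *
  linear_combination hE - hG

theorem corner10 (N M : ℕ) (x y : ℕ → ℝ) (z t : ℕ → ℕ → ℝ) (a b : ℕ → ℕ → ℝ) (n m : ℕ)
    (hx : x 0 - x N ≠ 0) (hy : y 0 - y M ≠ 0) :
    pMap N M x y z t a b n m (x N) (y 0)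
      = z n (m-1) - a n m * z N 0 - b n m * t N 0 := by
  obtain ⟨hG, hE, hF⟩ := coef_eqs N M x y z t a b n m hx hy
  simp only [pMap, kCoef, eva] at *
  linear_combination hF - hG

theorem corner11 (N M : ℕ) (x y : ℕ → ℝ) (z t : ℕ → ℕ → ℝ) (a b : ℕ → ℕ → ℝ) (n m : ℕ)
    (hx : x 0 - x N ≠ 0) (hy : y 0 - y M ≠ 0) :
    pMap N M x y z t a b n m (x N) (y M)
      = z n m - a n m * z N M - b n m * t N M := by
  simp only [pMap, kCoef]
  ring

theorem pMap_interp (N M : ℕ) (x y : ℕ → ℝ) (z t : ℕ → ℕ → ℝ) (a b : ℕ → ℕ → ℝ) (n m : ℕ)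
    (hx : x 0 - x N ≠ 0) (hy : y 0 - y M ≠ 0) (X Y : ℝ) :
    pMap N M x y z t a b n m X Y =
      ( (x N - X)*(y M - Y)*(z (n-1) (m-1) - a n m * z 0 0 - b n m * t 0 0)
      + (x N - X)*(Y - y 0)*(z (n-1) m - a n m * z 0 M - b n m * t 0 M)
      + (X - x 0)*(y M - Y)*(z n (m-1) - a n m * z N 0 - b n m * t N 0)
      + (X - x 0)*(Y - y 0)*(z n m - a n m * z N M - b n m * t N M) )
      / ((x N - x 0)*(y M - y 0)) := by
  rw [← corner00 N M x y z t a b n m hx hy, ← corner01 N M x y z t a b n m hx hy,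
    ← corner10 N M x y z t a b n m hx hy, ← corner11 N M x y z t a b n m hx hy]
  simp only [pMap]
  have hu : x N - x 0 ≠ 0 := fun h => hx (by linarith [sub_eq_zero.mp h])
  have hv : y M - y 0 ≠ 0 := fun h => hy (by linarith [sub_eq_zero.mp h])
  field_simp
  ring

theorem pMap_transfer (N M : ℕ) (x y xs ys : ℕ → ℝ) (z t : ℕ → ℕ → ℝ) (a b : ℕ → ℕ → ℝ)
    (n m : ℕ) (X Y : ℝ)
    (hx : x 0 - x N ≠ 0) (hy : y 0 - y M ≠ 0) (hxs : xs 0 - xs N ≠ 0) (hys : ys 0 - ys M ≠ 0) :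
    pMap N M xs ys z t a b n m
      (xs 0 + (xs N - xs 0) * (X - x 0) / (x N - x 0))
      (ys 0 + (ys M - ys 0) * (Y - y 0) / (y M - y 0))
      = pMap N M x y z t a b n m X Y := by
  rw [pMap_interp N M xs ys z t a b n m hxs hys, pMap_interp N M x y z t a b n m hx hy]
  have hu : x N - x 0 ≠ 0 := fun h => hx (by linarith [sub_eq_zero.mp h])
  have hv : y M - y 0 ≠ 0 := fun h => hy (by linarith [sub_eq_zero.mp h])
  have hus : xs N - xs 0 ≠ 0 := fun h => hxs (by linarith [sub_eq_zero.mp h])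
  have hvs : ys M - ys 0 ≠ 0 := fun h => hys (by linarith [sub_eq_zero.mp h])
  field_simp
  ring
theorem knot_lt (N : ℕ) (x : ℕ → ℝ) (hx : ∀ i < N, x i < x (i+1)) :
    ∀ i j, i < j → j ≤ N → x i < x j := by
  intro i j hij hjN
  induction j with
  | zero => omega
  | succ k ih =>
    rcases Nat.lt_succ_iff_lt_or_eq.mp hij with h | h
    · exact lt_trans (ih h (by omega)) (hx k (by omega))
    · subst h; exact hx i (by omega)

theorem find_cell (N : ℕ) (hN : 1 ≤ N) (x : ℕ → ℝ)
    (hlt : ∀ i j, i < j → j ≤ N → x i < x j) {X : ℝ}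
    (h0 : x 0 ≤ X) (h1 : X ≤ x N) :
    ∃ n, 1 ≤ n ∧ n ≤ N ∧ x (n-1) ≤ X ∧ X ≤ x n := by
  classical
  have hP : ∃ k, X ≤ x k := ⟨N, h1⟩
  have hk1 : X ≤ x (Nat.find hP) := Nat.find_spec hP
  have hkN : Nat.find hP ≤ N := Nat.find_min' hP h1
  rcases Nat.eq_zero_or_pos (Nat.find hP) with h0k | h0k
  · refine ⟨1, le_rfl, hN, by simpa using h0, ?_⟩
    rw [h0k] at hk1
    exact le_trans hk1 (le_of_lt (hlt 0 1 one_pos hN))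
  · refine ⟨Nat.find hP, h0k, hkN, ?_, hk1⟩
    have := Nat.find_min hP (m := Nat.find hP - 1) (by omega)
    push_neg at this
    exact this.le

theorem phi_commute (N n : ℕ) (x xs : ℕ → ℝ) (X' : ℝ)
    (h1 : xs (n-1) = xs 0 + (xs N - xs 0) * (x (n-1) - x 0) / (x N - x 0))
    (h2 : xs n = xs 0 + (xs N - xs 0) * (x n - x 0) / (x N - x 0))
    (hd : x N - x 0 ≠ 0) (hds : xs N - xs 0 ≠ 0) :
    phiMap N xs n (xs 0 + (xs N - xs 0) * (X' - x 0) / (x N - x 0))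
      = xs 0 + (xs N - xs 0) * (phiMap N x n X' - x 0) / (x N - x 0) := by
  simp only [phiMap]
  rw [h1, h2]
  field_simp
  ring

theorem xs_affine (N : ℕ) (x xs : ℕ → ℝ)
    (hr : ∀ n, 1 ≤ n → n ≤ N → (x 0 - x N)/(xs 0 - xs N) = (x (n-1) - x n)/(xs (n-1) - xs n))
    (hd : x N - x 0 ≠ 0) (hds : xs N - xs 0 ≠ 0)
    (hdn : ∀ n, 1 ≤ n → n ≤ N → xs (n-1) - xs n ≠ 0) :
    ∀ k ≤ N, xs k = xs 0 + (xs N - xs 0) * (x k - x 0) / (x N - x 0) := by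
  have hds' : xs 0 - xs N ≠ 0 := fun h => hds (by linarith [sub_eq_zero.mp h])
  have step : ∀ n, 1 ≤ n → n ≤ N →
      (xs n - xs (n-1)) * (x N - x 0) = (xs N - xs 0) * (x n - x (n-1)) := by
    intro n hn1 hnN
    have h := hr n hn1 hnN
    rw [div_eq_div_iff hds' (hdn n hn1 hnN)] at h
    linear_combination h
  intro k
  induction k with
  | zero => intro _; simp
  | succ j ih =>
    intro hjN
    have hj := ih (by omega)
    have hs := step (j+1) (by omega) hjN
    simp only [Nat.add_sub_cancel] at hs
    have h2 : xs (j+1) = xs j + (xs N - xs 0) * (x (j+1) - x j)/(x N - x 0) := by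
      have h3 : (xs N - xs 0) * (x (j+1) - x j) / (x N - x 0) = xs (j+1) - xs j := by
        rw [div_eq_iff hd]; linarith [hs]
      linarith [h3]
    rw [h2, hj]
    field_simp
    ring

theorem affine_abs_le (A s p q X : ℝ) (h1 : p ≤ X) (h2 : X ≤ q) :
    |A + s*(X - p)| ≤ max |A| |A + s*(q - p)| := by
  rw [abs_le]
  constructor
  · rcases le_or_gt 0 s with hs | hs
    · nlinarith [neg_abs_le A, le_max_left |A| |A + s*(q-p)|,
        mul_nonneg hs (sub_nonneg.mpr h1)]
    · nlinarith [neg_abs_le (A + s*(q-p)), le_max_right |A| |A + s*(q-p)|,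
        mul_nonneg (le_of_lt (neg_pos.mpr hs)) (sub_nonneg.mpr h2)]
  · rcases le_or_gt 0 s with hs | hs
    · nlinarith [le_abs_self (A + s*(q-p)), le_max_right |A| |A + s*(q-p)|,
        mul_nonneg hs (sub_nonneg.mpr h2)]
    · nlinarith [le_abs_self A, le_max_left |A| |A + s*(q-p)|,
        mul_nonneg (le_of_lt (neg_pos.mpr hs)) (sub_nonneg.mpr h1)]
/-- Validity of generalized interpolation data: `N, M ≥ 1`, strictly increasing knots,
`|α_{n,m}| < 1` and `|β_{n,m}| + |γ_{n,m}| < 1`. -/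
structure DataOK (N M : ℕ) (x y : ℕ → ℝ) (a b c : ℕ → ℕ → ℝ) : Prop where
  hN : 1 ≤ N
  hM : 1 ≤ M
  hx : ∀ i < N, x i < x (i+1)
  hy : ∀ j < M, y j < y (j+1)
  ha : ∀ n m, 1 ≤ n → n ≤ N → 1 ≤ m → m ≤ M → |a n m| < 1
  hbc : ∀ n m, 1 ≤ n → n ≤ N → 1 ≤ m → m ≤ M → |b n m| + |c n m| < 1

/-- `(F₁, F₂)` is the CHFIS pair for the generalized interpolation data. -/
def IsCHFIS (N M : ℕ) (x y : ℕ → ℝ) (z t : ℕ → ℕ → ℝ) (a b c : ℕ → ℕ → ℝ)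
    (F₁ F₂ : ℝ → ℝ → ℝ) : Prop :=
  ContinuousOn (fun P : ℝ × ℝ => F₁ P.1 P.2) (Icc (x 0) (x N) ×ˢ Icc (y 0) (y M)) ∧
  ContinuousOn (fun P : ℝ × ℝ => F₂ P.1 P.2) (Icc (x 0) (x N) ×ˢ Icc (y 0) (y M)) ∧
  (∀ i ≤ N, ∀ j ≤ M, F₁ (x i) (y j) = z i j ∧ F₂ (x i) (y j) = t i j) ∧
  ∀ n m, 1 ≤ n → n ≤ N → 1 ≤ m → m ≤ M →
    ∀ X ∈ Icc (x 0) (x N), ∀ Y ∈ Icc (y 0) (y M),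
      F₁ (phiMap N x n X) (phiMap M y m Y)
        = a n m * F₁ X Y + b n m * F₂ X Y + pMap N M x y z t a b n m X Y ∧
      F₂ (phiMap N x n X) (phiMap M y m Y)
        = c n m * F₂ X Y + qMap N M x y t c n m X Y

/-- The invariance-of-ratio condition between the knots `x, y` and the knots `xs, ys`. -/
def RatioInv (N M : ℕ) (x y xs ys : ℕ → ℝ) : Prop :=
  (∀ n, 1 ≤ n → n ≤ N → (x 0 - x N) / (xs 0 - xs N) = (x (n-1) - x n) / (xs (n-1) - xs n)) ∧
  (∀ m, 1 ≤ m → m ≤ M → (y 0 - y M) / (ys 0 - ys M) = (y (m-1) - y m) / (ys (m-1) - ys m))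

/-- `T : [x₀, x_N] → [xs₀, xs_N]` is the cell-wise affine transfer map, sending
`[x_{n-1}, x_n]` affinely onto `[xs_{n-1}, xs_n]` (one coordinate of `R` resp. `K`). -/
def IsTransfer (N : ℕ) (x xs : ℕ → ℝ) (T : ℝ → ℝ) : Prop :=
  ∀ n, 1 ≤ n → n ≤ N → ∀ X ∈ Icc (x (n-1)) (x n),
    T X = xs (n-1) + (xs n - xs (n-1)) * (X - x (n-1)) / (x n - x (n-1))

/-- `max { |a n m| : 1 ≤ n ≤ N, 1 ≤ m ≤ M }` (as an `sSup`). -/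
def supParam (N M : ℕ) (a : ℕ → ℕ → ℝ) : ℝ :=
  sSup {v : ℝ | ∃ n m, 1 ≤ n ∧ n ≤ N ∧ 1 ≤ m ∧ m ≤ M ∧ v = |a n m|}

/-- `max { (|x_n - xs_n| + |y_m - ys_m|)^δ : 0 ≤ n ≤ N, 0 ≤ m ≤ M }` (as an `sSup`). -/
def supKnotDiff (N M : ℕ) (x xs y ys : ℕ → ℝ) (d : ℝ) : ℝ :=
  sSup {v : ℝ | ∃ n m, n ≤ N ∧ m ≤ M ∧ v = (|x n - xs n| + |y m - ys m|) ^ d}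

/-- `max { |z_{n,m} - zs_{n,m}| : 0 ≤ n ≤ N, 0 ≤ m ≤ M }` (as an `sSup`). -/
def supValDiff (N M : ℕ) (z zs : ℕ → ℕ → ℝ) : ℝ :=
  sSup {v : ℝ | ∃ n m, n ≤ N ∧ m ≤ M ∧ v = |z n m - zs n m|}

/-- `max { |z_{i,j} - z_{k,l}| : 0 ≤ i,j,k,l ≤ N }` (as an `sSup`). -/
def supPairDiff (N : ℕ) (z : ℕ → ℕ → ℝ) : ℝ :=
  sSup {v : ℝ | ∃ i j k l, i ≤ N ∧ j ≤ N ∧ k ≤ N ∧ l ≤ N ∧ v = |z i j - z k l|}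

set_option maxHeartbeats 2000000 in
/-- the intermediate bound
`‖G₁ - F₁‖_{∞,S*} ≤ (β/(1-α)) ‖G₂ ∘ R - F₂‖_{∞,S} + ((1+α)/(1-α)) M̄ max (…)^δ`. -/
theorem chfis_stability_indep_F1_intermediate (N M : ℕ) (x y xs ys : ℕ → ℝ)
    (z t : ℕ → ℕ → ℝ) (a b c : ℕ → ℕ → ℝ)
    (hD : DataOK N M x y a b c) (hDs : DataOK N M xs ys a b c)
    (hratio : RatioInv N M x y xs ys)
    (hsub : Icc (xs 0) (xs N) ×ˢ Icc (ys 0) (ys M) ⊆ Icc (x 0) (x N) ×ˢ Icc (y 0) (y M))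
    (RX RY : ℝ → ℝ)
    (hRX : IsTransfer N x xs RX) (hRY : IsTransfer M y ys RY)
    (F₁ F₂ G₁ G₂ : ℝ → ℝ → ℝ)
    (hF : IsCHFIS N M x y z t a b c F₁ F₂)
    (hG : IsCHFIS N M xs ys z t a b c G₁ G₂)
    (Mb δ : ℝ) (hMb : 0 ≤ Mb) (hδ : δ ∈ Set.Ioc (0:ℝ) 1)
    (hH1 : ∀ X ∈ Icc (x 0) (x N), ∀ Y ∈ Icc (y 0) (y M),
      ∀ X' ∈ Icc (x 0) (x N), ∀ Y' ∈ Icc (y 0) (y M),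
        |F₁ X Y - F₁ X' Y'| ≤ Mb * (|X - X'| + |Y - Y'|) ^ δ) :
    ∀ X ∈ Icc (xs 0) (xs N), ∀ Y ∈ Icc (ys 0) (ys M),
      |G₁ X Y - F₁ X Y| ≤
        supParam N M b / (1 - supParam N M a)
          * sSup {v : ℝ | ∃ X' Y', X' ∈ Icc (x 0) (x N) ∧ Y' ∈ Icc (y 0) (y M) ∧
              v = |G₂ (RX X') (RY Y') - F₂ X' Y'|}
        + (1 + supParam N M a) / (1 - supParam N M a) * Mb
          * supKnotDiff N M x xs y ys δ := by
  classical
  -- basic positivity facts about the knots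
  have hxmono := knot_lt N x hD.hx
  have hymono := knot_lt M y hD.hy
  have hxsmono := knot_lt N xs hDs.hx
  have hysmono := knot_lt M ys hDs.hy
  have hdx : 0 < x N - x 0 := sub_pos.mpr (hxmono 0 N hD.hN le_rfl)
  have hdy : 0 < y M - y 0 := sub_pos.mpr (hymono 0 M hD.hM le_rfl)
  have hdxs : 0 < xs N - xs 0 := sub_pos.mpr (hxsmono 0 N hD.hN le_rfl)
  have hdys : 0 < ys M - ys 0 := sub_pos.mpr (hysmono 0 M hD.hM le_rfl)
  have hdx' : x 0 - x N ≠ 0 := by intro h; nlinarith [sub_eq_zero.mp h]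
  have hdy' : y 0 - y M ≠ 0 := by intro h; nlinarith [sub_eq_zero.mp h]
  have hdxs' : xs 0 - xs N ≠ 0 := by intro h; nlinarith [sub_eq_zero.mp h]
  have hdys' : ys 0 - ys M ≠ 0 := by intro h; nlinarith [sub_eq_zero.mp h]
  -- the starred knots are affine images of the unstarred ones
  have hxsaff : ∀ k ≤ N, xs k = xs 0 + (xs N - xs 0) * (x k - x 0) / (x N - x 0) :=
    xs_affine N x xs hratio.1 hdx.ne' hdxs.ne'
      (fun n h1 h2 => sub_ne_zero.mpr (hxsmono (n-1) n (by omega) h2).ne)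
  have hysaff : ∀ k ≤ M, ys k = ys 0 + (ys M - ys 0) * (y k - y 0) / (y M - y 0) :=
    xs_affine M y ys hratio.2 hdy.ne' hdys.ne'
      (fun m h1 h2 => sub_ne_zero.mpr (hysmono (m-1) m (by omega) h2).ne)
  -- the transfer maps are globally affine
  have hRXaff : ∀ W ∈ Icc (x 0) (x N), RX W = xs 0 + (xs N - xs 0) * (W - x 0) / (x N - x 0) := by
    intro W hW
    obtain ⟨n, h1, h2, hl, hr⟩ := find_cell N hD.hN x hxmono hW.1 hW.2
    rw [hRX n h1 h2 W ⟨hl, hr⟩, hxsaff (n-1) (by omega), hxsaff n h2]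
    have hcell : x n - x (n-1) ≠ 0 := (sub_pos.mpr (hxmono (n-1) n (by omega) h2)).ne'
    field_simp
    ring
  have hRYaff : ∀ W ∈ Icc (y 0) (y M), RY W = ys 0 + (ys M - ys 0) * (W - y 0) / (y M - y 0) := by
    intro W hW
    obtain ⟨m, h1, h2, hl, hr⟩ := find_cell M hD.hM y hymono hW.1 hW.2
    rw [hRY m h1 h2 W ⟨hl, hr⟩, hysaff (m-1) (by omega), hysaff m h2]
    have hcell : y m - y (m-1) ≠ 0 := (sub_pos.mpr (hymono (m-1) m (by omega) h2)).ne'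
    field_simp
    ring
  have hRXmaps : ∀ W ∈ Icc (x 0) (x N), RX W ∈ Icc (xs 0) (xs N) := by
    intro W hW
    rw [hRXaff W hW]
    constructor
    · have : 0 ≤ (xs N - xs 0) * (W - x 0) / (x N - x 0) :=
        div_nonneg (mul_nonneg hdxs.le (by linarith [hW.1])) hdx.le
      linarith
    · have : (xs N - xs 0) * (W - x 0) / (x N - x 0) ≤ xs N - xs 0 := by
        rw [div_le_iff₀ hdx]; nlinarith [hW.2]
      linarith
  have hRYmaps : ∀ W ∈ Icc (y 0) (y M), RY W ∈ Icc (ys 0) (ys M) := by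
    intro W hW
    rw [hRYaff W hW]
    constructor
    · have : 0 ≤ (ys M - ys 0) * (W - y 0) / (y M - y 0) :=
        div_nonneg (mul_nonneg hdys.le (by linarith [hW.1])) hdy.le
      linarith
    · have : (ys M - ys 0) * (W - y 0) / (y M - y 0) ≤ ys M - ys 0 := by
        rw [div_le_iff₀ hdy]; nlinarith [hW.2]
      linarith
  -- facts about the parameter suprema
  have hAfin : {v : ℝ | ∃ n m, 1 ≤ n ∧ n ≤ N ∧ 1 ≤ m ∧ m ≤ M ∧ v = |a n m|}.Finite := by
    apply Set.Finite.subset (((Set.finite_Iic N).prod (Set.finite_Iic M)).image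
      (fun p : ℕ × ℕ => |a p.1 p.2|))
    rintro v ⟨n, m, _, hn, _, hm, rfl⟩
    exact ⟨(n, m), ⟨hn, hm⟩, rfl⟩
  have hBfin : {v : ℝ | ∃ n m, 1 ≤ n ∧ n ≤ N ∧ 1 ≤ m ∧ m ≤ M ∧ v = |b n m|}.Finite := by
    apply Set.Finite.subset (((Set.finite_Iic N).prod (Set.finite_Iic M)).image
      (fun p : ℕ × ℕ => |b p.1 p.2|))
    rintro v ⟨n, m, _, hn, _, hm, rfl⟩
    exact ⟨(n, m), ⟨hn, hm⟩, rfl⟩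
  have hAne : {v : ℝ | ∃ n m, 1 ≤ n ∧ n ≤ N ∧ 1 ≤ m ∧ m ≤ M ∧ v = |a n m|}.Nonempty :=
    ⟨|a 1 1|, 1, 1, le_rfl, hD.hN, le_rfl, hD.hM, rfl⟩
  have hBne : {v : ℝ | ∃ n m, 1 ≤ n ∧ n ≤ N ∧ 1 ≤ m ∧ m ≤ M ∧ v = |b n m|}.Nonempty :=
    ⟨|b 1 1|, 1, 1, le_rfl, hD.hN, le_rfl, hD.hM, rfl⟩
  have hαmem : supParam N M a ∈ {v : ℝ | ∃ n m, 1 ≤ n ∧ n ≤ N ∧ 1 ≤ m ∧ m ≤ M ∧ v = |a n m|} :=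
    hAne.csSup_mem hAfin
  have hβmem : supParam N M b ∈ {v : ℝ | ∃ n m, 1 ≤ n ∧ n ≤ N ∧ 1 ≤ m ∧ m ≤ M ∧ v = |b n m|} :=
    hBne.csSup_mem hBfin
  have hα0 : 0 ≤ supParam N M a := by
    obtain ⟨n, m, _, _, _, _, h⟩ := hαmem; rw [h]; exact abs_nonneg _
  have hβ0 : 0 ≤ supParam N M b := by
    obtain ⟨n, m, _, _, _, _, h⟩ := hβmem; rw [h]; exact abs_nonneg _
  have hα1 : supParam N M a < 1 := by
    obtain ⟨n, m, h1, h2, h3, h4, h⟩ := hαmem; rw [h]; exact hD.ha n m h1 h2 h3 h4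
  have hαle : ∀ n m, 1 ≤ n → n ≤ N → 1 ≤ m → m ≤ M → |a n m| ≤ supParam N M a :=
    fun n m h1 h2 h3 h4 => le_csSup hAfin.bddAbove ⟨n, m, h1, h2, h3, h4, rfl⟩
  have hβle : ∀ n m, 1 ≤ n → n ≤ N → 1 ≤ m → m ≤ M → |b n m| ≤ supParam N M b :=
    fun n m h1 h2 h3 h4 => le_csSup hBfin.bddAbove ⟨n, m, h1, h2, h3, h4, rfl⟩
  -- facts about the knot-difference supremum
  have hDfin : {v : ℝ | ∃ n m, n ≤ N ∧ m ≤ M ∧ v = (|x n - xs n| + |y m - ys m|) ^ δ}.Finite := by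
    apply Set.Finite.subset (((Set.finite_Iic N).prod (Set.finite_Iic M)).image
      (fun p : ℕ × ℕ => (|x p.1 - xs p.1| + |y p.2 - ys p.2|) ^ δ))
    rintro v ⟨n, m, hn, hm, rfl⟩
    exact ⟨(n, m), ⟨hn, hm⟩, rfl⟩
  have hKdle : ∀ n m, n ≤ N → m ≤ M →
      (|x n - xs n| + |y m - ys m|) ^ δ ≤ supKnotDiff N M x xs y ys δ :=
    fun n m hn hm => le_csSup hDfin.bddAbove ⟨n, m, hn, hm, rfl⟩
  have hKd0 : 0 ≤ supKnotDiff N M x xs y ys δ :=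
    le_trans (Real.rpow_nonneg (by positivity) δ) (hKdle 0 0 (Nat.zero_le _) (Nat.zero_le _))
  -- continuity of the transferred functions
  have hRXc : ContinuousOn RX (Icc (x 0) (x N)) := by
    apply ContinuousOn.congr (f := fun W => xs 0 + (xs N - xs 0) * (W - x 0) / (x N - x 0))
    · fun_prop
    · exact fun W hW => hRXaff W hW
  have hRYc : ContinuousOn RY (Icc (y 0) (y M)) := by
    apply ContinuousOn.congr (f := fun W => ys 0 + (ys M - ys 0) * (W - y 0) / (y M - y 0))
    · fun_prop
    · exact fun W hW => hRYaff W hW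
  have hKcomp : IsCompact (Icc (x 0) (x N) ×ˢ Icc (y 0) (y M)) :=
    isCompact_Icc.prod isCompact_Icc
  have hpairc : ContinuousOn (fun P : ℝ × ℝ => (RX P.1, RY P.2))
      (Icc (x 0) (x N) ×ˢ Icc (y 0) (y M)) :=
    (hRXc.comp continuousOn_fst (fun P hP => hP.1)).prodMk
      (hRYc.comp continuousOn_snd (fun P hP => hP.2))
  have hmapsto : Set.MapsTo (fun P : ℝ × ℝ => (RX P.1, RY P.2))
      (Icc (x 0) (x N) ×ˢ Icc (y 0) (y M)) (Icc (xs 0) (xs N) ×ˢ Icc (ys 0) (ys M)) :=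
    fun P hP => ⟨hRXmaps P.1 hP.1, hRYmaps P.2 hP.2⟩
  have hH1c : ContinuousOn (fun P : ℝ × ℝ => G₁ (RX P.1) (RY P.2) - F₁ P.1 P.2)
      (Icc (x 0) (x N) ×ˢ Icc (y 0) (y M)) :=
    (hG.1.comp hpairc hmapsto).sub hF.1
  have hH2c : ContinuousOn (fun P : ℝ × ℝ => G₂ (RX P.1) (RY P.2) - F₂ P.1 P.2)
      (Icc (x 0) (x N) ×ˢ Icc (y 0) (y M)) :=
    (hG.2.1.comp hpairc hmapsto).sub hF.2.1
  have hx0mem : x 0 ∈ Icc (x 0) (x N) := ⟨le_rfl, by linarith⟩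
  have hy0mem : y 0 ∈ Icc (y 0) (y M) := ⟨le_rfl, by linarith⟩
  -- the sets U and W are nonempty and bounded above
  obtain ⟨C1, hC1⟩ := hKcomp.exists_bound_of_continuousOn hH1c
  obtain ⟨C2, hC2⟩ := hKcomp.exists_bound_of_continuousOn hH2c
  set U : Set ℝ := {v : ℝ | ∃ X' Y', X' ∈ Icc (x 0) (x N) ∧ Y' ∈ Icc (y 0) (y M) ∧
      v = |G₁ (RX X') (RY Y') - F₁ X' Y'|} with hUdef
  set W : Set ℝ := {v : ℝ | ∃ X' Y', X' ∈ Icc (x 0) (x N) ∧ Y' ∈ Icc (y 0) (y M) ∧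
      v = |G₂ (RX X') (RY Y') - F₂ X' Y'|} with hWdef
  have hUbdd : BddAbove U := by
    refine ⟨C1, ?_⟩
    rintro v ⟨X', Y', hX', hY', rfl⟩
    have := hC1 (X', Y') ⟨hX', hY'⟩
    simpa [Real.norm_eq_abs] using this
  have hWbdd : BddAbove W := by
    refine ⟨C2, ?_⟩
    rintro v ⟨X', Y', hX', hY', rfl⟩
    have := hC2 (X', Y') ⟨hX', hY'⟩
    simpa [Real.norm_eq_abs] using this
  have hUne : U.Nonempty := ⟨_, x 0, y 0, hx0mem, hy0mem, rfl⟩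
  have hw0 : 0 ≤ sSup W :=
    le_trans (abs_nonneg _) (le_csSup hWbdd ⟨x 0, y 0, hx0mem, hy0mem, rfl⟩)
  -- the contraction step
  have hstep : ∀ v ∈ U, v ≤ supParam N M a * sSup U + supParam N M b * sSup W := by
    rintro v ⟨P, Q, hP, hQ, rfl⟩
    obtain ⟨n, hn1, hnN, hPl, hPr⟩ := find_cell N hD.hN x hxmono hP.1 hP.2
    obtain ⟨m, hm1, hmM, hQl, hQr⟩ := find_cell M hD.hM y hymono hQ.1 hQ.2
    have hcellx : 0 < x n - x (n-1) := sub_pos.mpr (hxmono (n-1) n (by omega) hnN)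
    have hcelly : 0 < y m - y (m-1) := sub_pos.mpr (hymono (m-1) m (by omega) hmM)
    set P' : ℝ := x 0 + (P - x (n-1)) * (x N - x 0) / (x n - x (n-1)) with hP'def
    set Q' : ℝ := y 0 + (Q - y (m-1)) * (y M - y 0) / (y m - y (m-1)) with hQ'def
    have hP'mem : P' ∈ Icc (x 0) (x N) := by
      constructor
      · have : 0 ≤ (P - x (n-1)) * (x N - x 0) / (x n - x (n-1)) :=
          div_nonneg (mul_nonneg (by linarith) hdx.le) hcellx.le
        rw [hP'def]; linarith
      · have : (P - x (n-1)) * (x N - x 0) / (x n - x (n-1)) ≤ x N - x 0 := by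
          rw [div_le_iff₀ hcellx]; nlinarith
        rw [hP'def]; linarith
    have hQ'mem : Q' ∈ Icc (y 0) (y M) := by
      constructor
      · have : 0 ≤ (Q - y (m-1)) * (y M - y 0) / (y m - y (m-1)) :=
          div_nonneg (mul_nonneg (by linarith) hdy.le) hcelly.le
        rw [hQ'def]; linarith
      · have : (Q - y (m-1)) * (y M - y 0) / (y m - y (m-1)) ≤ y M - y 0 := by
          rw [div_le_iff₀ hcelly]; nlinarith
        rw [hQ'def]; linarith
    have hphiP : phiMap N x n P' = P := by
      simp only [phiMap, hP'def]
      field_simp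
      ring
    have hphiQ : phiMap M y m Q' = Q := by
      simp only [phiMap, hQ'def]
      field_simp
      ring
    have hFeq := (hF.2.2.2 n m hn1 hnN hm1 hmM P' hP'mem Q' hQ'mem).1
    have hGeq := (hG.2.2.2 n m hn1 hnN hm1 hmM (RX P') (hRXmaps P' hP'mem)
      (RY Q') (hRYmaps Q' hQ'mem)).1
    have hcomm1 : phiMap N xs n (RX P') = RX P := by
      rw [hRXaff P' hP'mem,
        phi_commute N n x xs P' (hxsaff (n-1) (by omega)) (hxsaff n hnN) hdx.ne' hdxs.ne',
        hphiP, ← hRXaff P hP]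
    have hcomm2 : phiMap M ys m (RY Q') = RY Q := by
      rw [hRYaff Q' hQ'mem,
        phi_commute M m y ys Q' (hysaff (m-1) (by omega)) (hysaff m hmM) hdy.ne' hdys.ne',
        hphiQ, ← hRYaff Q hQ]
    have hptrans : pMap N M xs ys z t a b n m (RX P') (RY Q')
        = pMap N M x y z t a b n m P' Q' := by
      rw [hRXaff P' hP'mem, hRYaff Q' hQ'mem]
      exact pMap_transfer N M x y xs ys z t a b n m P' Q' hdx' hdy' hdxs' hdys'
    rw [hcomm1, hcomm2, hptrans] at hGeq
    rw [hphiP, hphiQ] at hFeq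
    have hdiff : G₁ (RX P) (RY Q) - F₁ P Q
        = a n m * (G₁ (RX P') (RY Q') - F₁ P' Q')
          + b n m * (G₂ (RX P') (RY Q') - F₂ P' Q') := by
      rw [hGeq, hFeq]; ring
    calc |G₁ (RX P) (RY Q) - F₁ P Q|
        = |a n m * (G₁ (RX P') (RY Q') - F₁ P' Q')
            + b n m * (G₂ (RX P') (RY Q') - F₂ P' Q')| := by rw [hdiff]
      _ ≤ |a n m * (G₁ (RX P') (RY Q') - F₁ P' Q')|
            + |b n m * (G₂ (RX P') (RY Q') - F₂ P' Q')| := abs_add_le _ _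
      _ = |a n m| * |G₁ (RX P') (RY Q') - F₁ P' Q'|
            + |b n m| * |G₂ (RX P') (RY Q') - F₂ P' Q'| := by rw [abs_mul, abs_mul]
      _ ≤ supParam N M a * sSup U + supParam N M b * sSup W := by
          apply add_le_add
          · exact mul_le_mul (hαle n m hn1 hnN hm1 hmM)
              (le_csSup hUbdd ⟨P', Q', hP'mem, hQ'mem, rfl⟩) (abs_nonneg _) hα0
          · exact mul_le_mul (hβle n m hn1 hnN hm1 hmM)
              (le_csSup hWbdd ⟨P', Q', hP'mem, hQ'mem, rfl⟩) (abs_nonneg _) hβ0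
  have huc : sSup U ≤ supParam N M a * sSup U + supParam N M b * sSup W := csSup_le hUne hstep
  have hu : sSup U ≤ supParam N M b / (1 - supParam N M a) * sSup W := by
    rw [div_mul_eq_mul_div, le_div_iff₀ (by linarith)]
    nlinarith [huc]
  -- final estimate
  intro X hX Y hY
  have hXY : (X, Y) ∈ Icc (x 0) (x N) ×ˢ Icc (y 0) (y M) := hsub ⟨hX, hY⟩
  have hXS : X ∈ Icc (x 0) (x N) := hXY.1
  have hYS : Y ∈ Icc (y 0) (y M) := hXY.2
  set P' : ℝ := x 0 + (X - xs 0) * (x N - x 0) / (xs N - xs 0) with hP'def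
  set Q' : ℝ := y 0 + (Y - ys 0) * (y M - y 0) / (ys M - ys 0) with hQ'def
  have hP'mem : P' ∈ Icc (x 0) (x N) := by
    constructor
    · have : 0 ≤ (X - xs 0) * (x N - x 0) / (xs N - xs 0) :=
        div_nonneg (mul_nonneg (by linarith [hX.1]) hdx.le) hdxs.le
      rw [hP'def]; linarith
    · have : (X - xs 0) * (x N - x 0) / (xs N - xs 0) ≤ x N - x 0 := by
        rw [div_le_iff₀ hdxs]; nlinarith [hX.2]
      rw [hP'def]; linarith
  have hQ'mem : Q' ∈ Icc (y 0) (y M) := by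
    constructor
    · have : 0 ≤ (Y - ys 0) * (y M - y 0) / (ys M - ys 0) :=
        div_nonneg (mul_nonneg (by linarith [hY.1]) hdy.le) hdys.le
      rw [hQ'def]; linarith
    · have : (Y - ys 0) * (y M - y 0) / (ys M - ys 0) ≤ y M - y 0 := by
        rw [div_le_iff₀ hdys]; nlinarith [hY.2]
      rw [hQ'def]; linarith
  have hRXP' : RX P' = X := by
    rw [hRXaff P' hP'mem, hP'def]
    field_simp
    ring
  have hRYQ' : RY Q' = Y := by
    rw [hRYaff Q' hQ'mem, hQ'def]
    field_simp
    ring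
  -- distance bound
  have hb1 : |P' - X| ≤ max |x 0 - xs 0| |x N - xs N| := by
    have he : P' - X = (x 0 - xs 0) + ((x N - x 0)/(xs N - xs 0) - 1) * (X - xs 0) := by
      rw [hP'def]; field_simp; ring
    have he2 : (x 0 - xs 0) + ((x N - x 0)/(xs N - xs 0) - 1) * (xs N - xs 0) = x N - xs N := by
      field_simp; ring
    calc |P' - X| = |(x 0 - xs 0) + ((x N - x 0)/(xs N - xs 0) - 1) * (X - xs 0)| := by rw [he]
      _ ≤ max |x 0 - xs 0|
            |(x 0 - xs 0) + ((x N - x 0)/(xs N - xs 0) - 1) * (xs N - xs 0)| :=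
          affine_abs_le _ _ _ _ _ hX.1 hX.2
      _ = max |x 0 - xs 0| |x N - xs N| := by rw [he2]
  have hb2 : |Q' - Y| ≤ max |y 0 - ys 0| |y M - ys M| := by
    have he : Q' - Y = (y 0 - ys 0) + ((y M - y 0)/(ys M - ys 0) - 1) * (Y - ys 0) := by
      rw [hQ'def]; field_simp; ring
    have he2 : (y 0 - ys 0) + ((y M - y 0)/(ys M - ys 0) - 1) * (ys M - ys 0) = y M - ys M := by
      field_simp; ring
    calc |Q' - Y| = |(y 0 - ys 0) + ((y M - y 0)/(ys M - ys 0) - 1) * (Y - ys 0)| := by rw [he]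
      _ ≤ max |y 0 - ys 0|
            |(y 0 - ys 0) + ((y M - y 0)/(ys M - ys 0) - 1) * (ys M - ys 0)| :=
          affine_abs_le _ _ _ _ _ hY.1 hY.2
      _ = max |y 0 - ys 0| |y M - ys M| := by rw [he2]
  obtain ⟨n₀, hn₀, hxb⟩ : ∃ n₀, n₀ ≤ N ∧ max |x 0 - xs 0| |x N - xs N| = |x n₀ - xs n₀| := by
    rcases le_total |x 0 - xs 0| |x N - xs N| with h | h
    · exact ⟨N, le_rfl, max_eq_right h⟩
    · exact ⟨0, Nat.zero_le N, max_eq_left h⟩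
  obtain ⟨m₀, hm₀, hyb⟩ : ∃ m₀, m₀ ≤ M ∧ max |y 0 - ys 0| |y M - ys M| = |y m₀ - ys m₀| := by
    rcases le_total |y 0 - ys 0| |y M - ys M| with h | h
    · exact ⟨M, le_rfl, max_eq_right h⟩
    · exact ⟨0, Nat.zero_le M, max_eq_left h⟩
  have hdist : (|P' - X| + |Q' - Y|) ^ δ ≤ supKnotDiff N M x xs y ys δ := by
    refine le_trans ?_ (hKdle n₀ m₀ hn₀ hm₀)
    apply Real.rpow_le_rpow (by positivity) ?_ hδ.1.le
    rw [← hxb, ← hyb]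
    exact add_le_add hb1 hb2
  -- put everything together
  have hT1 : |G₁ X Y - F₁ P' Q'| ≤ sSup U := by
    rw [← hRXP', ← hRYQ']
    exact le_csSup hUbdd ⟨P', Q', hP'mem, hQ'mem, rfl⟩
  have hT2 : |F₁ P' Q' - F₁ X Y| ≤ Mb * (|P' - X| + |Q' - Y|) ^ δ :=
    hH1 P' hP'mem Q' hQ'mem X hXS Y hYS
  have hMbK : Mb * (|P' - X| + |Q' - Y|) ^ δ ≤ Mb * supKnotDiff N M x xs y ys δ :=
    mul_le_mul_of_nonneg_left hdist hMb
  have hfac : Mb * supKnotDiff N M x xs y ys δ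
      ≤ (1 + supParam N M a) / (1 - supParam N M a) * Mb * supKnotDiff N M x xs y ys δ := by
    rw [mul_assoc]
    refine le_mul_of_one_le_left (mul_nonneg hMb hKd0) ?_
    rw [le_div_iff₀ (by linarith)]
    linarith
  calc |G₁ X Y - F₁ X Y| ≤ |G₁ X Y - F₁ P' Q'| + |F₁ P' Q' - F₁ X Y| := abs_sub_le _ _ _
    _ ≤ sSup U + Mb * (|P' - X| + |Q' - Y|) ^ δ := add_le_add hT1 hT2
    _ ≤ supParam N M b / (1 - supParam N M a) * sSup W
          + (1 + supParam N M a) / (1 - supParam N M a) * Mb * supKnotDiff N M x xs y ys δ :=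
        add_le_add hu (le_trans hMbK hfac)

end
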